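/- Let f be a neighbor function that is unbounded above, and let g : [f(0), ∞) → [0,∞) be the inverse of f (so g(f(x)) = x for all x ≥ 0 and f(g(a)) = a for all a ≥ f(0)). Then for all 0 < x < y and t ≥ 0, the relative length of the uncertainty interval is non-increasing: (g(f(y)+t) − g(max(f(0), f(y)−t)))/y ≤ (g(f(x)+t) − g(max(f(0), f(x)−t)))/x. -/

import Mathlib

/-- Equal increments of a convex function are larger further right. -/
lemma convex_increment {h : ℝ → ℝ} (hc : ConvexOn ℝ Set.univ h) {a b d : ℝ}
    (hab : a ≤ b) (hd : 0 ≤ d) : h (a + d) - h a ≤ h (b + d) - h b := by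
  rcases eq_or_lt_of_le hab with rfl | hab
  · simp
  rcases eq_or_lt_of_le hd with rfl | hd
  · simp
  have hden : 0 < b - a + d := by linarith
  set μ : ℝ := d / (b - a + d) with hμ
  have hμ0 : 0 ≤ μ := by positivity
  have hμ1 : 0 ≤ 1 - μ := by
    have : μ ≤ 1 := by
      rw [hμ, div_le_one hden]; linarith
    linarith
  have e1 : μ * a + (1 - μ) * (b + d) = b := by
    have hμd : μ * (b - a + d) = d := by rw [hμ]; exact div_mul_cancel₀ d hden.ne'
    field_simp [hμ]; linear_combination -hμd
  have e2 : (1 - μ) * a + μ * (b + d) = a + d := by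
    have hμd : μ * (b - a + d) = d := by rw [hμ]; exact div_mul_cancel₀ d hden.ne'
    field_simp [hμ]; linear_combination hμd
  have h1 := hc.2 (Set.mem_univ a) (Set.mem_univ (b + d)) hμ0 hμ1 (by ring)
  have h2 := hc.2 (Set.mem_univ a) (Set.mem_univ (b + d)) hμ1 hμ0 (by ring)
  simp only [smul_eq_mul] at h1 h2
  rw [e1] at h1
  rw [e2] at h2
  linarith

/-- A neighbor function: strictly increasing, continuous and concave on `[0, ∞)`,
and such that `x ↦ f (exp x)` is convex on `ℝ`. -/
def IsNeighborFun (f : ℝ → ℝ) : Prop :=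
  StrictMonoOn f (Set.Ici (0 : ℝ)) ∧ ContinuousOn f (Set.Ici (0 : ℝ)) ∧
    ConcaveOn ℝ (Set.Ici (0 : ℝ)) f ∧ ConvexOn ℝ Set.univ (fun x => f (Real.exp x))

theorem uncertainty_interval_relative_length_antitone (f g : ℝ → ℝ) (hf : IsNeighborFun f)
    (hub : ∀ M : ℝ, ∃ x : ℝ, 0 ≤ x ∧ M ≤ f x)
    (hg0 : ∀ a : ℝ, f 0 ≤ a → 0 ≤ g a)
    (hgf : ∀ x : ℝ, 0 ≤ x → g (f x) = x)
    (hfg : ∀ a : ℝ, f 0 ≤ a → f (g a) = a)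
    (x y t : ℝ) (hx : 0 < x) (hxy : x < y) (ht : 0 ≤ t) :
    (g (f y + t) - g (max (f 0) (f y - t))) / y ≤
      (g (f x + t) - g (max (f 0) (f x - t))) / x := by
  obtain ⟨hsm, -, -, hconv⟩ := hf
  have hy : 0 < y := hx.trans hxy
  set h : ℝ → ℝ := fun u => f (Real.exp u) with hh
  -- basic monotonicity facts
  have hmono' : ∀ u v : ℝ, h u ≤ h v → u ≤ v := by
    intro u v huv
    by_contra hlt
    push_neg at hlt
    exact absurd (hsm (Set.mem_Ici.2 (Real.exp_pos v).le) (Set.mem_Ici.2 (Real.exp_pos u).le)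
      (Real.exp_lt_exp.2 hlt)) (by simpa [hh] using huv.not_gt)
  have hf0x : f 0 < f x := hsm (Set.mem_Ici.2 le_rfl) (Set.mem_Ici.2 hx.le) hx
  have hfxy : f x < f y := hsm (Set.mem_Ici.2 hx.le) (Set.mem_Ici.2 hy.le) hxy
  have gmono : ∀ a b : ℝ, f 0 ≤ a → a ≤ b → g a ≤ g b := by
    intro a b ha hab
    by_contra hlt
    push_neg at hlt
    have := hsm (Set.mem_Ici.2 (hg0 b (ha.trans hab))) (Set.mem_Ici.2 (hg0 a ha)) hlt
    rw [hfg b (ha.trans hab), hfg a ha] at this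
    exact absurd this (not_lt.2 hab)
  have gpos : ∀ a : ℝ, f 0 < a → 0 < g a := by
    intro a ha
    rcases (hg0 a ha.le).lt_or_eq with hlt | heq
    · exact hlt
    · exfalso
      have := hfg a ha.le
      rw [← heq] at this
      exact absurd this.symm (ne_of_lt ha).symm
  set a : ℝ := Real.log x with hadef
  set b : ℝ := Real.log y with hbdef
  have hab : a ≤ b := Real.log_le_log hx hxy.le
  have hea : Real.exp a = x := Real.exp_log hx
  have heb : Real.exp b = y := Real.exp_log hy
  have hha : h a = f x := by rw [hh]; simp [hea]
  have hhb : h b = f y := by rw [hh]; simp [heb]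
  -- Part A : x * g (f y + t) ≤ y * g (f x + t)
  set A : ℝ := g (f x + t) with hAdef
  set B : ℝ := g (f y + t) with hBdef
  have hfA : f A = f x + t := hfg _ (by linarith)
  have hfB : f B = f y + t := hfg _ (by linarith)
  have hxA : x ≤ A := by
    have := gmono (f x) (f x + t) hf0x.le (by linarith)
    rwa [hgf x hx.le] at this
  have hyB : y ≤ B := by
    have := gmono (f y) (f y + t) (by linarith) (by linarith)
    rwa [hgf y hy.le] at this
  have hApos : 0 < A := hx.trans_le hxA
  have hBpos : 0 < B := hy.trans_le hyB
  have hhlA : h (Real.log A) = f x + t := by rw [hh]; simp [Real.exp_log hApos, hfA]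
  have hhlB : h (Real.log B) = f y + t := by rw [hh]; simp [Real.exp_log hBpos, hfB]
  have partA : x * B ≤ y * A := by
    set d : ℝ := Real.log A - a with hddef
    have hd0 : 0 ≤ d := by
      have := Real.log_le_log hx hxA
      rw [← hadef] at this; linarith
    have hinc := convex_increment hconv hab hd0
    have had : a + d = Real.log A := by rw [hddef]; ring
    rw [had, hhlA, hha, hhb] at hinc
    have hBb : Real.log B ≤ b + d := hmono' _ _ (by rw [hhlB]; linarith)
    -- so log B + log x ≤ log A + log y, hence B * x ≤ A * y
    have hlog : Real.log (x * B) ≤ Real.log (y * A) := by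
      rw [Real.log_mul hx.ne' hBpos.ne', Real.log_mul hy.ne' hApos.ne']
      rw [← hadef, ← hbdef]
      linarith
    exact (Real.log_le_log_iff (by positivity) (by positivity)).1 hlog
  -- Part B : y * g (max (f 0) (f x - t)) ≤ x * g (max (f 0) (f y - t))
  have partB : y * g (max (f 0) (f x - t)) ≤ x * g (max (f 0) (f y - t)) := by
    by_cases hcase : f 0 < f x - t
    · have hcy : f 0 < f y - t := by linarith
      rw [max_eq_right hcase.le, max_eq_right hcy.le]
      set C : ℝ := g (f x - t) with hCdef
      set D : ℝ := g (f y - t) with hDdef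
      have hfC : f C = f x - t := hfg _ hcase.le
      have hfD : f D = f y - t := hfg _ hcy.le
      have hCpos : 0 < C := gpos _ hcase
      have hDpos : 0 < D := gpos _ hcy
      have hCx : C ≤ x := by
        have := gmono (f x - t) (f x) hcase.le (by linarith)
        rwa [hgf x hx.le] at this
      have hDy : D ≤ y := by
        have := gmono (f y - t) (f y) hcy.le (by linarith)
        rwa [hgf y hy.le] at this
      have hhlC : h (Real.log C) = f x - t := by rw [hh]; simp [Real.exp_log hCpos, hfC]
      have hhlD : h (Real.log D) = f y - t := by rw [hh]; simp [Real.exp_log hDpos, hfD]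
      set d : ℝ := b - Real.log D with hddef
      have hd0 : 0 ≤ d := by
        have := Real.log_le_log hDpos hDy
        rw [← hbdef] at this; linarith
      have hinc := convex_increment hconv (show a - d ≤ b - d by linarith) hd0
      have e1 : a - d + d = a := by ring
      have e2 : b - d + d = b := by ring
      have e3 : b - d = Real.log D := by rw [hddef]; ring
      rw [e1, e2, e3, hhlD, hha, hhb] at hinc
      have hCa : Real.log C ≤ a - d := hmono' _ _ (by rw [hhlC]; linarith)
      have hlog : Real.log (y * C) ≤ Real.log (x * D) := by
        rw [Real.log_mul hy.ne' hCpos.ne', Real.log_mul hx.ne' hDpos.ne']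
        rw [← hadef, ← hbdef]
        linarith
      exact (Real.log_le_log_iff (by positivity) (by positivity)).1 hlog
    · push_neg at hcase
      rw [max_eq_left hcase]
      have hg0' : g (f 0) = 0 := hgf 0 le_rfl
      rw [hg0']
      have : 0 ≤ g (max (f 0) (f y - t)) := hg0 _ (le_max_left _ _)
      nlinarith
  rw [div_le_div_iff₀ hy hx]
  nlinarith [partA, partB]
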